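/- In a one-dimensional ISAC network with K nodes and nonempty sensing link set U(A), no free communication is possible: if (s*, f) ∈ R, where s* = Σ_{u ∈ U(A)} c_u is the maximum sensing fidelity, then f = 0. -/

import Mathlib

/-- An ISAC network on a finite node type `V`: a symmetric, irreflexive set of
directed links `E`, a source `Tx`, a sink `Rx`, a nonnegative capacity `c` on
undirected links (unordered pairs), and a sensing region `A`. -/
structure ISACNetwork (V : Type) [Fintype V] [DecidableEq V] where
  E : Finset (V × V)
  symm : ∀ i j : V, (i, j) ∈ E → (j, i) ∈ E
  irrefl : ∀ i : V, (i, i) ∉ E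
  Tx : V
  Rx : V
  TxNeRx : Tx ≠ Rx
  c : Sym2 V → ℝ
  c_nonneg : ∀ u : Sym2 V, 0 ≤ c u
  A : Finset V

namespace ISACNetwork

variable {V : Type} [Fintype V] [DecidableEq V]

/-- `E(A)`: directed links with both endpoints in the sensing region. -/
def EA (N : ISACNetwork V) : Finset (V × V) :=
  N.E.filter fun e => e.1 ∈ N.A ∧ e.2 ∈ N.A

/-- `U(A)`: undirected links with both endpoints in the sensing region. -/
def UA (N : ISACNetwork V) : Finset (Sym2 V) :=
  N.EA.image (fun e => Sym2.mk e.1 e.2)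

/-- A valid assignment of communication rates `f` and sensing rates `s`:
nonnegative rates for which there is a nonnegative capacity split `ca` of the
undirected link capacities with `f e + s e ≤ ca e` on each directed link, no
communication into the source or out of the sink, and flow conservation at
every intermediate node. -/
def Valid (N : ISACNetwork V) (f s : V × V → ℝ) : Prop :=
  (∀ e ∈ N.E, 0 ≤ f e) ∧ (∀ e ∈ N.E, 0 ≤ s e) ∧
  ∃ ca : V × V → ℝ,
    (∀ e ∈ N.E, 0 ≤ ca e) ∧
    (∀ i j : V, (i, j) ∈ N.E → ca (i, j) + ca (j, i) = N.c (Sym2.mk i j)) ∧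
    (∀ e ∈ N.E, f e + s e ≤ ca e) ∧
    (∀ i : V, (i, N.Tx) ∈ N.E → f (i, N.Tx) = 0) ∧
    (∀ j : V, (N.Rx, j) ∈ N.E → f (N.Rx, j) = 0) ∧
    (∀ j : V, j ≠ N.Tx → j ≠ N.Rx →
      ∑ i ∈ Finset.univ.filter (fun i => (i, j) ∈ N.E), f (i, j)
        = ∑ k ∈ Finset.univ.filter (fun k => (j, k) ∈ N.E), f (j, k))

/-- The sensing fidelity achieved by a sensing-rate assignment. -/
def sensOf (N : ISACNetwork V) (s : V × V → ℝ) : ℝ := ∑ e ∈ N.EA, s e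

/-- The throughput achieved by a communication-rate assignment. -/
def flowOf (N : ISACNetwork V) (f : V × V → ℝ) : ℝ :=
  ∑ j ∈ Finset.univ.filter (fun j => (N.Tx, j) ∈ N.E), f (N.Tx, j)

/-- The sensing–throughput region: all pairs `(s, f)` achieved by a valid
assignment. -/
def Region (N : ISACNetwork V) : Set (ℝ × ℝ) :=
  { p | ∃ fr sr : V × V → ℝ, N.Valid fr sr ∧ N.sensOf sr = p.1 ∧ N.flowOf fr = p.2 }

end ISACNetwork

/-- The one-dimensional ISAC network with `K ≥ 2` nodes: nodes `0, …, K-1`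
(standing for `1, …, K`), links between consecutive nodes in both directions,
source node `0` and sink node `K-1`. -/
def pathNetwork (K : ℕ) (hK : 2 ≤ K) (cap : Sym2 (Fin K) → ℝ)
    (hcap : ∀ u, 0 ≤ cap u) (A : Finset (Fin K)) : ISACNetwork (Fin K) where
  E := Finset.univ.filter fun e : Fin K × Fin K =>
    e.1.val + 1 = e.2.val ∨ e.2.val + 1 = e.1.val
  symm := by
    intro i j h
    simp only [Finset.mem_filter, Finset.mem_univ, true_and] at h ⊢
    tauto
  irrefl := by
    intro i h
    simp only [Finset.mem_filter, Finset.mem_univ, true_and] at h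
    omega
  Tx := ⟨0, by omega⟩
  Rx := ⟨K - 1, by omega⟩
  TxNeRx := by
    rw [Fin.ne_iff_vne]
    simp only [ne_eq]
    omega
  c := cap
  c_nonneg := hcap
  A := A

/-- `c_min`: the smallest undirected link capacity of the one-dimensional
ISAC network, `min_{1 ≤ j ≤ K-1} c_{{j,j+1}}`. -/
noncomputable def cmin (K : ℕ) (hK : 2 ≤ K) (cap : Sym2 (Fin K) → ℝ) : ℝ :=
  (Finset.univ : Finset (Fin (K - 1))).inf'
    (Finset.univ_nonempty_iff.mpr ⟨⟨0, by omega⟩⟩)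
    (fun j => cap (Sym2.mk ⟨j.val, by have := j.isLt; omega⟩
      ⟨j.val + 1, by have := j.isLt; omega⟩))

set_option maxHeartbeats 2000000 in
/-- In a one-dimensional ISAC network with nonempty sensing link set `U(A)`,
no free communication is possible: if `(s*, f) ∈ R`, where
`s* = Σ_{u ∈ U(A)} c_u` is the maximum sensing fidelity, then `f = 0`. -/
theorem oneD_no_free_communication {K : ℕ} (hK : 2 ≤ K)
    (cap : Sym2 (Fin K) → ℝ) (hcap : ∀ u, 0 ≤ cap u) (A : Finset (Fin K))
    (hUA : (pathNetwork K hK cap hcap A).UA.Nonempty) (f : ℝ)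
    (h : (∑ u ∈ (pathNetwork K hK cap hcap A).UA, cap u, f)
        ∈ (pathNetwork K hK cap hcap A).Region) :
    f = 0 := by
  set N := pathNetwork K hK cap hcap A with hN
  obtain ⟨fr, sr, ⟨hf0, hs0, ca, hca0, hcasum, hfs, hTx, hRx, hcons⟩, hsens, hflow⟩ := h
  simp only at hsens hflow
  -- membership in E
  have memE : ∀ i j : Fin K, (i, j) ∈ N.E ↔ (i.val + 1 = j.val ∨ j.val + 1 = i.val) := by
    intro i j
    simp [hN, pathNetwork]
  -- EA is symmetric
  have hEAsym : ∀ p ∈ N.EA, (p.2, p.1) ∈ N.EA := by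
    intro p hp
    simp only [ISACNetwork.EA, Finset.mem_filter] at hp ⊢
    exact ⟨N.symm _ _ hp.1, hp.2.2, hp.2.1⟩
  have hEAE : ∀ p ∈ N.EA, p ∈ N.E := by
    intro p hp
    simp only [ISACNetwork.EA, Finset.mem_filter] at hp
    exact hp.1
  have hEAne : ∀ p ∈ N.EA, p.1 ≠ p.2 := by
    intro p hp hpe
    have := (memE p.1 p.2).mp (hEAE p hp)
    rw [hpe] at this
    omega
  -- capacity sum over UA equals ca sum over EA
  have hcapca : ∑ u ∈ N.UA, cap u = ∑ e ∈ N.EA, ca e := by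
    refine Finset.sum_image' ca ?_
    intro p hp
    have hne : p.1 ≠ p.2 := hEAne p hp
    have hfib : N.EA.filter (fun q => Sym2.mk q.1 q.2 = Sym2.mk p.1 p.2) = {p, (p.2, p.1)} := by
      ext q
      simp only [Finset.mem_filter, Finset.mem_insert, Finset.mem_singleton]
      constructor
      · rintro ⟨hq, he⟩
        rcases q with ⟨a, b⟩
        rcases p with ⟨x, y⟩
        rw [Sym2.eq_iff] at he
        rcases he with ⟨h1, h2⟩ | ⟨h1, h2⟩
        · left; exact Prod.ext h1 h2
        · right; exact Prod.ext h1 h2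
      · rintro (rfl | hq)
        · exact ⟨hp, rfl⟩
        · rw [hq]
          refine ⟨hEAsym p hp, ?_⟩
          rcases p with ⟨x, y⟩
          rw [Sym2.eq_iff]
          tauto
    rw [hfib, Finset.sum_pair (by
      rcases p with ⟨x, y⟩
      simp only [ne_eq, Prod.mk.injEq, not_and]
      intro h1; exact absurd h1 hne)]
    have hcc := hcasum p.1 p.2 (hEAE p hp)
    simp only [Prod.mk.eta] at hcc
    exact hcc.symm
  -- every communication rate on EA vanishes
  have hfEA : ∀ e ∈ N.EA, fr e = 0 := by
    have hle : ∑ e ∈ N.EA, (fr e + sr e) ≤ ∑ e ∈ N.EA, ca e :=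
      Finset.sum_le_sum fun e he => hfs e (hEAE e he)
    rw [Finset.sum_add_distrib] at hle
    have hsum0 : ∑ e ∈ N.EA, fr e = 0 := by
      have h1 : ∑ e ∈ N.EA, fr e ≤ 0 := by
        have := hcapca
        unfold ISACNetwork.sensOf at hsens
        linarith [hle, hsens]
      have h2 : 0 ≤ ∑ e ∈ N.EA, fr e :=
        Finset.sum_nonneg fun e he => hf0 e (hEAE e he)
      linarith
    intro e he
    exact (Finset.sum_eq_zero_iff_of_nonneg fun e he => hf0 e (hEAE e he)).mp hsum0 e he
  -- flow across every edge: flowOf = fr(j, j+1) - fr(j+1, j)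
  have hTx0 : N.Tx = (⟨0, by omega⟩ : Fin K) := rfl
  have hRxK : N.Rx = (⟨K - 1, by omega⟩ : Fin K) := rfl
  have hcut : ∀ j : ℕ, (hj : j + 1 < K) →
      N.flowOf fr = fr (⟨j, by omega⟩, ⟨j + 1, hj⟩) - fr (⟨j + 1, hj⟩, ⟨j, by omega⟩) := by
    intro j
    induction j with
    | zero =>
      intro hj
      have hfil : Finset.univ.filter (fun k => (N.Tx, k) ∈ N.E)
          = {(⟨1, hj⟩ : Fin K)} := by
        ext k
        simp only [Finset.mem_filter, Finset.mem_univ, true_and, Finset.mem_singleton]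
        rw [hTx0, memE, Fin.ext_iff]
        simp only [Fin.val_zero]
        simp
        omega
      have h10 : fr (⟨1, hj⟩, ⟨0, by omega⟩) = 0 := by
        have := hTx ⟨1, hj⟩ (by rw [hTx0, memE]; simp)
        rw [hTx0] at this
        exact this
      unfold ISACNetwork.flowOf
      rw [hfil, Finset.sum_singleton, hTx0, h10]
      ring
    | succ j ih =>
      intro hj
      have hj1 : j + 1 < K := by omega
      have hmid : (⟨j + 1, hj1⟩ : Fin K) ≠ N.Tx := by
        rw [hTx0, Fin.ne_iff_vne]; simp
      have hmid2 : (⟨j + 1, hj1⟩ : Fin K) ≠ N.Rx := by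
        rw [hRxK, Fin.ne_iff_vne]; simp; omega
      have hin : Finset.univ.filter (fun i => (i, (⟨j + 1, hj1⟩ : Fin K)) ∈ N.E)
          = {(⟨j, by omega⟩ : Fin K), (⟨j + 2, hj⟩ : Fin K)} := by
        ext i
        simp only [Finset.mem_filter, Finset.mem_univ, true_and, Finset.mem_insert,
          Finset.mem_singleton]
        rw [memE, Fin.ext_iff, Fin.ext_iff]
        simp
        omega
      have hout : Finset.univ.filter (fun k => ((⟨j + 1, hj1⟩ : Fin K), k) ∈ N.E)
          = {(⟨j, by omega⟩ : Fin K), (⟨j + 2, hj⟩ : Fin K)} := by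
        ext k
        simp only [Finset.mem_filter, Finset.mem_univ, true_and, Finset.mem_insert,
          Finset.mem_singleton]
        rw [memE, Fin.ext_iff, Fin.ext_iff]
        simp
        omega
      have hne : (⟨j, by omega⟩ : Fin K) ≠ (⟨j + 2, hj⟩ : Fin K) := by
        rw [Fin.ne_iff_vne]; simp
      have hc := hcons ⟨j + 1, hj1⟩ hmid hmid2
      rw [hin, hout, Finset.sum_pair hne, Finset.sum_pair hne] at hc
      have := ih hj1
      rw [this]
      linarith
  -- pick an edge in the sensing region
  obtain ⟨u, hu⟩ := hUA
  obtain ⟨p, hp, rfl⟩ := Finset.mem_image.mp hu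
  have hpE := (memE p.1 p.2).mp (hEAE p hp)
  have hfp : fr p = 0 := hfEA p hp
  have hfp' : fr (p.2, p.1) = 0 := hfEA _ (hEAsym p hp)
  rw [← hflow]
  rcases hpE with h1 | h1
  · have hj : p.1.val + 1 < K := by rw [h1]; exact p.2.isLt
    have := hcut p.1.val hj
    rw [this]
    have e1 : ((⟨p.1.val, by omega⟩ : Fin K), (⟨p.1.val + 1, hj⟩ : Fin K)) = p := by
      rcases p with ⟨x, y⟩
      simp only [Prod.mk.injEq, Fin.ext_iff]
      exact ⟨trivial, h1⟩
    have e2 : ((⟨p.1.val + 1, hj⟩ : Fin K), (⟨p.1.val, by omega⟩ : Fin K)) = (p.2, p.1) := by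
      rcases p with ⟨x, y⟩
      simp only [Prod.mk.injEq, Fin.ext_iff]
      exact ⟨h1, trivial⟩
    rw [e1, e2, hfp, hfp']
    ring
  · have hj : p.2.val + 1 < K := by rw [h1]; exact p.1.isLt
    have := hcut p.2.val hj
    rw [this]
    have e1 : ((⟨p.2.val, by omega⟩ : Fin K), (⟨p.2.val + 1, hj⟩ : Fin K)) = (p.2, p.1) := by
      rcases p with ⟨x, y⟩
      simp only [Prod.mk.injEq, Fin.ext_iff]
      exact ⟨trivial, h1⟩
    have e2 : ((⟨p.2.val + 1, hj⟩ : Fin K), (⟨p.2.val, by omega⟩ : Fin K)) = p := by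
      rcases p with ⟨x, y⟩
      simp only [Prod.mk.injEq, Fin.ext_iff]
      exact ⟨h1, trivial⟩
    rw [e1, e2, hfp, hfp']
    ring
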